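/- Consider the flex-EA with lower-bound vector l satisfying l_1 > 0, optimizing a unimodal function f : {0,1}^n → ℝ with L fitness levels. For each j ∈ {1,…,L−1}, let s_j be a lower bound on the probability that, given an individual in fitness level j, flipping one position chosen uniformly at random creates an individual of strictly better fitness. Then the expected runtime of the flex-EA on f is at most 1 + l_1^{−1}·∑_{j=1}^{L−1} s_j^{−1}. In particular, it is at most 1 + n·(L−1)·l_1^{−1}. -/

import Mathlib

open scoped ENNReal Classical

namespace FlexEA

/-- Bit strings of length `n`. -/
abbrev Point (n : ℕ) := Fin n → Bool

/-- Flip the bits of `x` at the positions in `S`. -/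
def flipSet {n : ℕ} (x : Point n) (S : Finset (Fin n)) : Point n :=
  fun j => if j ∈ S then !(x j) else x j

/-- Flip exactly `r` positions of `x`, chosen uniformly at random
(junk value: no flip, if `r > n`). -/
noncomputable def flipPMF (n r : ℕ) (x : Point n) : PMF (Point n) :=
  if h : ((Finset.univ : Finset (Fin n)).powersetCard r).Nonempty then
    (PMF.uniformOfFinset _ h).map (flipSet x)
  else PMF.pure x

/-- The PMF given by real weights `w` supported on `s`
(junk value if the weights do not form a probability vector on `s`). -/
noncomputable def pmfOfWeights {α : Type} [Inhabited α] (w : α → ℝ) (s : Finset α) : PMF α :=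
  if h : (∑ a ∈ s, ENNReal.ofReal (w a)) = 1 ∧ ∀ a ∉ s, ENNReal.ofReal (w a) = 0 then
    PMF.ofFinset (fun a => ENNReal.ofReal (w a)) s h.1 h.2
  else PMF.pure default

/-- The water-filling level `c` used to distribute the remaining probability mass
as evenly as possible over the archive `A`, respecting the lower bounds `l`. -/
noncomputable def waterLevel (n : ℕ) (l : ℕ → ℝ) (A : Finset ℕ) : ℝ :=
  sInf {c : ℝ | 0 ≤ c ∧ (∑ i ∈ Finset.Icc 1 n, if i ∈ A then max (l i) c else l i) = 1}

/-- The frequency vector of the flex-EA: `p i = l i` for inactive rates, and the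
remaining mass is distributed as evenly as possible over the active rates in `A`,
subject to `p i ≥ l i`. -/
noncomputable def freq (n : ℕ) (l : ℕ → ℝ) (A : Finset ℕ) (i : ℕ) : ℝ :=
  if i ∈ Finset.Icc 1 n then (if i ∈ A then max (l i) (waterLevel n l A) else l i) else 0

/-- Sampling a rate `r ∈ {1, …, n}` according to the frequency vector. -/
noncomputable def ratePMF (n : ℕ) (l : ℕ → ℝ) (A : Finset ℕ) : PMF ℕ :=
  pmfOfWeights (freq n l A) (Finset.Icc 1 n)

/-- A state of the flex-EA: current solution `x`, archive `arch` of active rates,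
failure counters `cnt`, and global counter `glob`. -/
structure State (n : ℕ) where
  x : Point n
  arch : Finset ℕ
  cnt : ℕ → ℕ
  glob : ℕ

/-- The deterministic update of the flex-EA state after sampling rate `r`
and offspring `y`, when maximizing `f`. -/
noncomputable def updateState (n : ℕ) (f : Point n → ℝ) (l τ : ℕ → ℝ)
    (s : State n) (r : ℕ) (y : Point n) : State n :=
  if f s.x < f y then
    ⟨y, s.arch ∪ {r}, Function.update s.cnt r 0, 0⟩
  else
    let x' := if f y = f s.x then y else s.x
    let u' := s.glob + 1
    let c' := Function.update s.cnt r (s.cnt r + 1)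
    let m := if h : s.arch.Nonempty then s.arch.min' h else 1
    if τ m / freq n l s.arch m ≤ (u' : ℝ) then
      ⟨x', {1}, Function.update c' 1 0, 0⟩
    else if τ r ≤ (c' r : ℝ) then
      if s.arch.erase r = ∅ then
        ⟨x', {if r + 1 ≤ n then r + 1 else 1},
          Function.update c' (if r + 1 ≤ n then r + 1 else 1) 0, u'⟩
      else ⟨x', s.arch.erase r, c', u'⟩
    else ⟨x', s.arch, c', u'⟩

/-- One iteration of the flex-EA maximizing `f`, with lower-bound vector `l`
and count-bound vector `τ`. -/
noncomputable def step (n : ℕ) (f : Point n → ℝ) (l τ : ℕ → ℝ) (s : State n) :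
    PMF (State n) :=
  (ratePMF n l s.arch).bind fun r =>
    (flipPMF n r s.x).map fun y => updateState n f l τ s r y

/-- `x` is a global optimum (maximum) of `f`. -/
def isOpt (n : ℕ) (f : Point n → ℝ) (x : Point n) : Prop := ∀ y, f y ≤ f x

/-- The flex-EA step, made absorbing in the optimal states (used to express
the hitting time via marginal distributions). -/
noncomputable def stepAbs (n : ℕ) (f : Point n → ℝ) (l τ : ℕ → ℝ) (s : State n) :
    PMF (State n) :=
  if isOpt n f s.x then PMF.pure s else step n f l τ s

/-- Initial state: uniformly random solution, archive `{1}`, all counters `0`. -/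
noncomputable def initPMF (n : ℕ) : PMF (State n) :=
  (PMF.uniformOfFintype (Point n)).map fun x => ⟨x, {1}, fun _ => 0, 0⟩

/-- Distribution of the (absorbed) flex-EA state after `t` iterations. -/
noncomputable def stateAt (n : ℕ) (f : Point n → ℝ) (l τ : ℕ → ℝ) : ℕ → PMF (State n)
  | 0 => initPMF n
  | t + 1 => (stateAt n f l τ t).bind (stepAbs n f l τ)

/-- Expected runtime (number of `f`-evaluations until an optimum of `f` is first
evaluated) of the flex-EA on `f`:  `E[1 + T] = 1 + ∑_{t ≥ 0} Pr[T > t]` where `T`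
is the hitting time of the optimal states. -/
noncomputable def expectedRuntime (n : ℕ) (f : Point n → ℝ) (l τ : ℕ → ℝ) : ℝ≥0∞ :=
  1 + ∑' t : ℕ, (stateAt n f l τ t).toOuterMeasure {s | ¬ isOpt n f s.x}

/-- Number of one-bits of `x`. -/
def oneBits {n : ℕ} (x : Point n) : ℕ := (Finset.univ.filter fun i => x i = true).card

/-- Number of fitness levels of `f` (cardinality of the range of `f`). -/
noncomputable def numLevels (n : ℕ) (f : Point n → ℝ) : ℕ :=
  (Finset.univ.image f).card

/-- Index (from `1` to `numLevels`) of the fitness level of `x`, levels being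
ordered by increasing fitness. -/
noncomputable def levelIdx (n : ℕ) (f : Point n → ℝ) (x : Point n) : ℕ :=
  ((Finset.univ.image f).filter fun v => v ≤ f x).card

/-- Probability that flipping a single position of `x`, chosen uniformly at
random, creates an individual of strictly better fitness. -/
noncomputable def improveProb (n : ℕ) (f : Point n → ℝ) (x : Point n) : ℝ :=
  ((Finset.univ.filter fun i : Fin n => f x < f (flipSet x {i})).card : ℝ) / n

set_option linter.unnecessarySeqFocus false
set_option linter.unusedVariables false

lemma tsum_pure_mul {α : Type*} (a : α) (g : α → ℝ≥0∞) :
    ∑' b, (PMF.pure a) b * g b = g a := by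
  rw [tsum_eq_single a]
  · simp [PMF.pure_apply]
  · intro b hb; simp [PMF.pure_apply, hb]

lemma tsum_bind_mul {α β : Type*} (p : PMF α) (q : α → PMF β) (g : β → ℝ≥0∞) :
    ∑' b, (p.bind q) b * g b = ∑' a, p a * ∑' b, (q a) b * g b := by
  simp only [PMF.bind_apply]
  calc ∑' b, (∑' a, p a * (q a) b) * g b = ∑' b, ∑' a, p a * (q a) b * g b := by
        exact tsum_congr fun b => ENNReal.tsum_mul_right.symm
    _ = ∑' a, ∑' b, p a * (q a) b * g b := ENNReal.tsum_comm
    _ = ∑' a, p a * ∑' b, (q a) b * g b := by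
        refine tsum_congr fun a => ?_
        rw [← ENNReal.tsum_mul_left]
        exact tsum_congr fun b => (mul_assoc _ _ _)

lemma tsum_map_mul {α β : Type*} (p : PMF α) (f : α → β) (g : β → ℝ≥0∞) :
    ∑' b, (p.map f) b * g b = ∑' a, p a * g (f a) := by
  rw [PMF.map, tsum_bind_mul]
  exact tsum_congr fun a => by rw [Function.comp_apply, tsum_pure_mul]

lemma tsum_pmf_mul_const {α : Type*} (p : PMF α) (c : ℝ≥0∞) :
    ∑' a, p a * c = c := by
  rw [ENNReal.tsum_mul_right, PMF.tsum_coe, one_mul]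

lemma tsum_pmf_le_const {α : Type*} (p : PMF α) {g : α → ℝ≥0∞} {c : ℝ≥0∞}
    (h : ∀ a, p a ≠ 0 → g a ≤ c) : ∑' a, p a * g a ≤ c := by
  calc ∑' a, p a * g a ≤ ∑' a, p a * c := by
        refine ENNReal.tsum_le_tsum fun a => ?_
        by_cases ha : p a = 0
        · simp [ha]
        · exact mul_le_mul_right (h a ha) _
    _ = c := tsum_pmf_mul_const p c

-- waterLevel spec
lemma waterLevel_spec {n : ℕ} (l : ℕ → ℝ) (hl0 : ∀ i, 0 ≤ l i)
    (hlsum : ∑ i ∈ Finset.Icc 1 n, l i ≤ 1)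
    {A : Finset ℕ} (hA : A.Nonempty) (hAsub : A ⊆ Finset.Icc 1 n) :
    0 ≤ waterLevel n l A ∧
      (∑ i ∈ Finset.Icc 1 n, if i ∈ A then max (l i) (waterLevel n l A) else l i) = 1 := by
  set g : ℝ → ℝ := fun c => ∑ i ∈ Finset.Icc 1 n, if i ∈ A then max (l i) c else l i with hg
  have hcont : Continuous g := by
    apply continuous_finset_sum
    intro i _
    by_cases hi : i ∈ A
    · simpa [hi] using (continuous_const.max continuous_id)
    · simpa [hi] using continuous_const
  have hg0 : g 0 ≤ 1 := by
    have : g 0 = ∑ i ∈ Finset.Icc 1 n, l i := by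
      refine Finset.sum_congr rfl fun i _ => ?_
      by_cases hi : i ∈ A <;> simp [hi, max_eq_left (hl0 i)]
    rw [this]; exact hlsum
  have hg1 : 1 ≤ g 1 := by
    obtain ⟨a, ha⟩ := hA
    have hmem : a ∈ Finset.Icc 1 n := hAsub ha
    have h1 : (1:ℝ) ≤ (if a ∈ A then max (l a) 1 else l a) := by
      simp [ha, le_max_right]
    refine le_trans h1 (Finset.single_le_sum (f := fun i => if i ∈ A then max (l i) 1 else l i) (fun i _ => ?_) hmem)
    by_cases hi : i ∈ A
    · simp only [hi, if_true]; exact le_max_of_le_left (hl0 i)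
    · simpa [hi] using hl0 i
  obtain ⟨c, hc01, hc⟩ := intermediate_value_Icc (by norm_num : (0:ℝ) ≤ 1)
    hcont.continuousOn ⟨hg0, hg1⟩
  set S : Set ℝ := {c : ℝ | 0 ≤ c ∧ g c = 1} with hS
  have hSne : S.Nonempty := ⟨c, hc01.1, hc⟩
  have hScl : IsClosed S := by
    have : S = Set.Ici (0:ℝ) ∩ g ⁻¹' {1} := by
      ext t; simp [hS, Set.mem_Ici]
    rw [this]
    exact isClosed_Ici.inter (isClosed_singleton.preimage hcont)
  have hSbdd : BddBelow S := ⟨0, fun t ht => ht.1⟩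
  have hmem : sInf S ∈ S := hScl.csInf_mem hSne hSbdd
  have hwl : waterLevel n l A = sInf S := rfl
  exact ⟨hwl ▸ hmem.1, by rw [show waterLevel n l A = sInf S from rfl]; exact hmem.2⟩

lemma freq_nonneg {n : ℕ} (l : ℕ → ℝ) (hl0 : ∀ i, 0 ≤ l i) (A : Finset ℕ) (i : ℕ) :
    0 ≤ freq n l A i := by
  unfold freq
  split_ifs with h1 h2
  · exact le_trans (hl0 i) (le_max_left _ _)
  · exact hl0 i
  · exact le_refl _

lemma ratePMF_apply {n : ℕ} (l : ℕ → ℝ) (hl0 : ∀ i, 0 ≤ l i)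
    (hlsum : ∑ i ∈ Finset.Icc 1 n, l i ≤ 1)
    {A : Finset ℕ} (hA : A.Nonempty) (hAsub : A ⊆ Finset.Icc 1 n) (r : ℕ) :
    ratePMF n l A r = ENNReal.ofReal (freq n l A r) := by
  have hspec := waterLevel_spec l hl0 hlsum hA hAsub
  have hsum : (∑ a ∈ Finset.Icc 1 n, ENNReal.ofReal (freq n l A a)) = 1 := by
    rw [← ENNReal.ofReal_sum_of_nonneg (fun i _ => freq_nonneg l hl0 A i)]
    have : (∑ a ∈ Finset.Icc 1 n, freq n l A a)
        = ∑ i ∈ Finset.Icc 1 n, if i ∈ A then max (l i) (waterLevel n l A) else l i :=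
      Finset.sum_congr rfl fun i hi => by simp [freq, hi]
    rw [this, hspec.2, ENNReal.ofReal_one]
  have hz : ∀ a ∉ Finset.Icc 1 n, ENNReal.ofReal (freq n l A a) = 0 := by
    intro a ha; simp [freq, ha]
  rw [ratePMF, pmfOfWeights, dif_pos ⟨hsum, hz⟩]
  rfl

lemma ratePMF_support {n : ℕ} (l : ℕ → ℝ) (hl0 : ∀ i, 0 ≤ l i)
    (hlsum : ∑ i ∈ Finset.Icc 1 n, l i ≤ 1)
    {A : Finset ℕ} (hA : A.Nonempty) (hAsub : A ⊆ Finset.Icc 1 n) {r : ℕ}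
    (hr : ratePMF n l A r ≠ 0) : r ∈ Finset.Icc 1 n := by
  by_contra h
  rw [ratePMF_apply l hl0 hlsum hA hAsub] at hr
  simp [freq, h] at hr

lemma ratePMF_one_le {n : ℕ} (hn : 1 ≤ n) (l : ℕ → ℝ) (hl0 : ∀ i, 0 ≤ l i)
    (hlsum : ∑ i ∈ Finset.Icc 1 n, l i ≤ 1)
    {A : Finset ℕ} (hA : A.Nonempty) (hAsub : A ⊆ Finset.Icc 1 n) :
    ENNReal.ofReal (l 1) ≤ ratePMF n l A 1 := by
  rw [ratePMF_apply l hl0 hlsum hA hAsub]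
  apply ENNReal.ofReal_le_ofReal
  have h1 : (1:ℕ) ∈ Finset.Icc 1 n := by simp [hn]
  unfold freq
  rw [if_pos h1]
  by_cases hA1 : 1 ∈ A
  · simp [hA1, le_max_left]
  · simp [hA1]

lemma flip_one_improve {n : ℕ} (hn : 1 ≤ n) (f : Point n → ℝ) (x : Point n) :
    ∑' y, (flipPMF n 1 x) y * (if f x < f y then (1:ℝ≥0∞) else 0)
      = ENNReal.ofReal (improveProb n f x) := by
  have hcard : ((Finset.univ : Finset (Fin n)).powersetCard 1).card = n := by
    rw [Finset.card_powersetCard]; simp [Nat.choose_one_right]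
  have hne : ((Finset.univ : Finset (Fin n)).powersetCard 1).Nonempty := by
    rw [← Finset.card_pos, hcard]; omega
  rw [flipPMF, dif_pos hne, tsum_map_mul]
  set t := (Finset.univ : Finset (Fin n)).powersetCard 1 with ht
  rw [tsum_eq_sum (s := t) (fun S hS => by
    simp [PMF.uniformOfFinset_apply, hS]; intro _; simpa [ht] using hS)]
  have : ∀ S ∈ t, (PMF.uniformOfFinset t hne) S = ((n:ℝ≥0∞))⁻¹ := fun S hS => by
    simp [PMF.uniformOfFinset_apply, hS, hcard]
  rw [Finset.sum_congr rfl fun S hS => by rw [this S hS]]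
  rw [← Finset.mul_sum]
  have hbij : (∑ S ∈ t, if f x < f (flipSet x S) then (1:ℝ≥0∞) else 0)
      = ∑ i : Fin n, if f x < f (flipSet x {i}) then (1:ℝ≥0∞) else 0 := by
    rw [ht, Finset.powersetCard_one, Finset.sum_map]
    rfl
  rw [hbij, Finset.sum_boole]
  rw [improveProb, ENNReal.ofReal_div_of_pos (by exact_mod_cast Nat.pos_of_ne_zero (by omega))]
  rw [ENNReal.ofReal_natCast, ENNReal.ofReal_natCast, div_eq_mul_inv, mul_comm]

-- basic updateState facts
lemma updateState_x {n : ℕ} (f : Point n → ℝ) (l τ : ℕ → ℝ) (s : State n) (r : ℕ)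
    (y : Point n) :
    (updateState n f l τ s r y).x = if f s.x < f y then y
      else if f y = f s.x then y else s.x := by
  unfold updateState
  dsimp only
  split_ifs <;> rfl

def Inv (n : ℕ) (s : State n) : Prop := s.arch.Nonempty ∧ s.arch ⊆ Finset.Icc 1 n

lemma updateState_inv {n : ℕ} (hn : 1 ≤ n) (f : Point n → ℝ) (l τ : ℕ → ℝ)
    {s : State n} (hs : Inv n s) {r : ℕ} (hr : r ∈ Finset.Icc 1 n) (y : Point n) :
    Inv n (updateState n f l τ s r y) := by
  have h1 : (1:ℕ) ∈ Finset.Icc 1 n := by simp [hn]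
  simp only [Finset.mem_Icc] at hr
  unfold updateState
  dsimp only
  split_ifs <;>
    first
    | exact ⟨Finset.Nonempty.inr ⟨r, Finset.mem_singleton_self r⟩,
        Finset.union_subset hs.2 (by simp [Finset.mem_Icc]; omega)⟩
    | exact ⟨⟨1, Finset.mem_singleton_self 1⟩, by simpa using h1⟩
    | exact ⟨⟨r + 1, Finset.mem_singleton_self _⟩,
        by simp only [Finset.singleton_subset_iff, Finset.mem_Icc]; omega⟩
    | exact ⟨Finset.nonempty_iff_ne_empty.mpr (by assumption),
        (Finset.erase_subset _ _).trans hs.2⟩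
    | exact hs

lemma one_le_levelIdx {n : ℕ} (f : Point n → ℝ) (x : Point n) : 1 ≤ levelIdx n f x := by
  rw [levelIdx, ← Finset.card_singleton (f x)]
  apply Finset.card_le_card
  intro v hv
  rw [Finset.mem_singleton] at hv
  subst hv
  exact Finset.mem_filter.mpr ⟨Finset.mem_image_of_mem f (Finset.mem_univ x), le_refl _⟩

lemma levelIdx_le {n : ℕ} (f : Point n → ℝ) {xopt : Point n}
    (hopt : ∀ y : Point n, y ≠ xopt → f y < f xopt) {x : Point n} (hx : x ≠ xopt) :
    levelIdx n f x ≤ numLevels n f - 1 := by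
  have hlt : f x < f xopt := hopt x hx
  have hmem : f xopt ∈ Finset.univ.image f := Finset.mem_image_of_mem f (Finset.mem_univ xopt)
  have hsub : (Finset.univ.image f).filter (fun v => v ≤ f x)
      ⊆ (Finset.univ.image f).erase (f xopt) := by
    intro v hv
    rw [Finset.mem_filter] at hv
    exact Finset.mem_erase.mpr ⟨ne_of_lt (lt_of_le_of_lt hv.2 hlt), hv.1⟩
  calc levelIdx n f x ≤ ((Finset.univ.image f).erase (f xopt)).card := Finset.card_le_card hsub
    _ = numLevels n f - 1 := Finset.card_erase_of_mem hmem

lemma levelIdx_congr {n : ℕ} (f : Point n → ℝ) {x y : Point n} (h : f x = f y) :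
    levelIdx n f x = levelIdx n f y := by
  rw [levelIdx, levelIdx, h]

lemma levelIdx_lt {n : ℕ} (f : Point n → ℝ) {x y : Point n} (h : f x < f y) :
    levelIdx n f x < levelIdx n f y := by
  apply Finset.card_lt_card
  rw [Finset.ssubset_iff_of_subset]
  · exact ⟨f y, Finset.mem_filter.mpr ⟨Finset.mem_image_of_mem f (Finset.mem_univ y), le_refl _⟩,
      fun hc => absurd ((Finset.mem_filter.mp hc).2) (not_le.mpr h)⟩
  · intro v hv
    rw [Finset.mem_filter] at hv ⊢
    exact ⟨hv.1, le_trans hv.2 (le_of_lt h)⟩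

noncomputable def pot (n : ℕ) (f : Point n → ℝ) (l s : ℕ → ℝ) (x : Point n) : ℝ :=
  (l 1)⁻¹ * ∑ k ∈ Finset.Icc (levelIdx n f x) (numLevels n f - 1), (s k)⁻¹

section Pot
variable {n : ℕ} {f : Point n → ℝ} {l s : ℕ → ℝ}
  (hl1 : 0 < l 1) (hs : ∀ j ∈ Finset.Icc 1 (numLevels n f - 1), 0 < s j)

include hl1 hs

lemma pot_nonneg (x : Point n) : 0 ≤ pot n f l s x := by
  apply mul_nonneg (inv_nonneg.mpr (le_of_lt hl1))
  apply Finset.sum_nonneg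
  intro k hk
  rw [Finset.mem_Icc] at hk
  refine inv_nonneg.mpr (le_of_lt (hs k ?_))
  rw [Finset.mem_Icc]
  exact ⟨le_trans (one_le_levelIdx f x) hk.1, hk.2⟩

lemma pot_le (x : Point n) :
    pot n f l s x ≤ (l 1)⁻¹ * ∑ k ∈ Finset.Icc 1 (numLevels n f - 1), (s k)⁻¹ := by
  apply mul_le_mul_of_nonneg_left _ (inv_nonneg.mpr (le_of_lt hl1))
  apply Finset.sum_le_sum_of_subset_of_nonneg
  · apply Finset.Icc_subset_Icc_left (one_le_levelIdx f x)
  · intro k hk _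
    rw [Finset.mem_Icc] at hk
    exact inv_nonneg.mpr (le_of_lt (hs k (Finset.mem_Icc.mpr hk)))

lemma pot_drop {x y : Point n} (hxy : f x < f y)
    (hj : levelIdx n f x ≤ numLevels n f - 1) :
    pot n f l s y + (l 1)⁻¹ * (s (levelIdx n f x))⁻¹ ≤ pot n f l s x := by
  set j := levelIdx n f x with hjdef
  have hx_eq : pot n f l s x
      = (l 1)⁻¹ * ((s j)⁻¹ + ∑ k ∈ Finset.Ioc j (numLevels n f - 1), (s k)⁻¹) := by
    rw [pot, ← hjdef, Finset.Icc_eq_cons_Ioc hj, Finset.sum_cons]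
  have hsum_le : ∑ k ∈ Finset.Icc (levelIdx n f y) (numLevels n f - 1), (s k)⁻¹
      ≤ ∑ k ∈ Finset.Ioc j (numLevels n f - 1), (s k)⁻¹ := by
    apply Finset.sum_le_sum_of_subset_of_nonneg
    · rw [← Finset.Icc_add_one_left_eq_Ioc]
      apply Finset.Icc_subset_Icc_left
      exact levelIdx_lt f hxy
    · intro k hk _
      rw [Finset.mem_Ioc] at hk
      refine inv_nonneg.mpr (le_of_lt (hs k ?_))
      rw [Finset.mem_Icc]
      exact ⟨le_trans (one_le_levelIdx f x) (le_of_lt hk.1), hk.2⟩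
  rw [hx_eq, pot, mul_add]
  have := mul_le_mul_of_nonneg_left hsum_le (inv_nonneg.mpr (le_of_lt hl1))
  linarith

end Pot

lemma isOpt_xopt {n : ℕ} {f : Point n → ℝ} {xopt : Point n}
    (hopt : ∀ y : Point n, y ≠ xopt → f y < f xopt) : isOpt n f xopt := by
  intro y
  by_cases hy : y = xopt
  · rw [hy]
  · exact le_of_lt (hopt y hy)

lemma step_drift {n : ℕ} (hn : 1 ≤ n) (f : Point n → ℝ) {xopt : Point n}
    (hopt : ∀ y : Point n, y ≠ xopt → f y < f xopt)
    (l τ : ℕ → ℝ) (hl0 : ∀ i, 0 ≤ l i) (hlsum : ∑ i ∈ Finset.Icc 1 n, l i ≤ 1)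
    (hl1 : 0 < l 1) (s : ℕ → ℝ)
    (hs : ∀ j ∈ Finset.Icc 1 (numLevels n f - 1), 0 < s j)
    (hsle : ∀ j ∈ Finset.Icc 1 (numLevels n f - 1), ∀ x : Point n,
      levelIdx n f x = j → s j ≤ improveProb n f x)
    {st : State n} (hst : Inv n st) :
    (∑' s', stepAbs n f l τ st s' * ENNReal.ofReal (pot n f l s s'.x))
      + (if isOpt n f st.x then 0 else 1) ≤ ENNReal.ofReal (pot n f l s st.x) := by
  by_cases hop : isOpt n f st.x
  · rw [stepAbs, if_pos hop, if_pos hop, tsum_pure_mul, add_zero]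
  · rw [stepAbs, if_neg hop, if_neg hop]
    have hxne : st.x ≠ xopt := fun hc => hop (hc ▸ isOpt_xopt hopt)
    set j := levelIdx n f st.x with hjdef
    have hjmem : j ∈ Finset.Icc 1 (numLevels n f - 1) :=
      Finset.mem_Icc.mpr ⟨one_le_levelIdx f st.x, levelIdx_le f hopt hxne⟩
    have hsj : 0 < s j := hs j hjmem
    have himp : s j ≤ improveProb n f st.x := hsle j hjmem st.x rfl
    set d := ENNReal.ofReal ((l 1)⁻¹ * (s j)⁻¹) with hd
    set C := ENNReal.ofReal (pot n f l s st.x) with hC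
    have hdnn : (0:ℝ) ≤ (l 1)⁻¹ * (s j)⁻¹ :=
      mul_nonneg (inv_nonneg.mpr (le_of_lt hl1)) (inv_nonneg.mpr (le_of_lt hsj))
    -- pointwise claim
    have hpoint : ∀ (r : ℕ) (y : Point n),
        ENNReal.ofReal (pot n f l s (updateState n f l τ st r y).x)
          + (if f st.x < f y then d else 0) ≤ C := by
      intro r y
      rw [updateState_x]
      by_cases him : f st.x < f y
      · rw [if_pos him, if_pos him, hd, hC,
          ← ENNReal.ofReal_add (pot_nonneg hl1 hs y) hdnn]
        exact ENNReal.ofReal_le_ofReal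
          (pot_drop hl1 hs him (Finset.mem_Icc.mp hjmem).2)
      · rw [if_neg him, if_neg him, add_zero]
        by_cases heq : f y = f st.x
        · rw [if_pos heq, hC]
          apply ENNReal.ofReal_le_ofReal
          rw [pot, pot, levelIdx_congr f heq]
        · rw [if_neg heq, hC]
    set P := ratePMF n l st.arch with hP
    set Q : ℕ → ℝ≥0∞ := fun r =>
      ∑' y, (flipPMF n r st.x) y * (if f st.x < f y then (1:ℝ≥0∞) else 0) with hQ
    -- step A
    have hA : ∀ r : ℕ,
        (∑' y, (flipPMF n r st.x) y
          * ENNReal.ofReal (pot n f l s (updateState n f l τ st r y).x)) + d * Q r ≤ C := by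
      intro r
      have h1 : d * Q r = ∑' y, (flipPMF n r st.x) y
          * (if f st.x < f y then d else 0) := by
        rw [hQ, ← ENNReal.tsum_mul_left]
        refine tsum_congr fun y => ?_
        by_cases hy : f st.x < f y <;> simp [hy] <;> ring
      rw [h1, ← ENNReal.tsum_add]
      calc ∑' y, ((flipPMF n r st.x) y
            * ENNReal.ofReal (pot n f l s (updateState n f l τ st r y).x)
              + (flipPMF n r st.x) y * (if f st.x < f y then d else 0))
          = ∑' y, (flipPMF n r st.x) y
            * (ENNReal.ofReal (pot n f l s (updateState n f l τ st r y).x)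
              + (if f st.x < f y then d else 0)) := by
            refine tsum_congr fun y => (mul_add _ _ _).symm
        _ ≤ ∑' y, (flipPMF n r st.x) y * C :=
            ENNReal.tsum_le_tsum fun y => mul_le_mul_right (hpoint r y) _
        _ = C := tsum_pmf_mul_const _ _
    -- step B
    have hB : (∑' r, P r * ∑' y, (flipPMF n r st.x) y
          * ENNReal.ofReal (pot n f l s (updateState n f l τ st r y).x))
        + d * ∑' r, P r * Q r ≤ C := by
      have h1 : d * ∑' r, P r * Q r = ∑' r, P r * (d * Q r) := by
        rw [← ENNReal.tsum_mul_left]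
        exact tsum_congr fun r => by ring
      rw [h1, ← ENNReal.tsum_add]
      calc ∑' r, (P r * (∑' y, (flipPMF n r st.x) y
            * ENNReal.ofReal (pot n f l s (updateState n f l τ st r y).x)) + P r * (d * Q r))
          = ∑' r, P r * ((∑' y, (flipPMF n r st.x) y
            * ENNReal.ofReal (pot n f l s (updateState n f l τ st r y).x)) + d * Q r) := by
            refine tsum_congr fun r => (mul_add _ _ _).symm
        _ ≤ ∑' r, P r * C := ENNReal.tsum_le_tsum fun r => mul_le_mul_right (hA r) _
        _ = C := tsum_pmf_mul_const _ _
    -- step C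
    have hC1 : 1 ≤ d * ∑' r, P r * Q r := by
      have hle : P 1 * Q 1 ≤ ∑' r, P r * Q r := ENNReal.le_tsum 1
      have hQ1 : Q 1 = ENNReal.ofReal (improveProb n f st.x) := flip_one_improve hn f st.x
      have hP1 : ENNReal.ofReal (l 1) ≤ P 1 := ratePMF_one_le hn l hl0 hlsum hst.1 hst.2
      have hQ1' : ENNReal.ofReal (s j) ≤ Q 1 := by
        rw [hQ1]; exact ENNReal.ofReal_le_ofReal himp
      have hprod : ENNReal.ofReal (l 1) * ENNReal.ofReal (s j) ≤ P 1 * Q 1 :=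
        mul_le_mul' hP1 hQ1'
      calc (1:ℝ≥0∞) = d * (ENNReal.ofReal (l 1) * ENNReal.ofReal (s j)) := by
            rw [hd, ← ENNReal.ofReal_mul (le_of_lt hl1), ← ENNReal.ofReal_mul hdnn]
            rw [show (l 1)⁻¹ * (s j)⁻¹ * (l 1 * s j) = 1 by
              field_simp]
            rw [ENNReal.ofReal_one]
        _ ≤ d * ∑' r, P r * Q r := mul_le_mul_right (le_trans hprod hle) _
    -- combine
    rw [step, tsum_bind_mul]
    have hmap : ∀ r : ℕ, (∑' s', ((flipPMF n r st.x).map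
          (fun y => updateState n f l τ st r y)) s' * ENNReal.ofReal (pot n f l s s'.x))
        = ∑' y, (flipPMF n r st.x) y
          * ENNReal.ofReal (pot n f l s (updateState n f l τ st r y).x) := fun r =>
      tsum_map_mul _ _ _
    calc (∑' r, P r * ∑' s', ((flipPMF n r st.x).map
            (fun y => updateState n f l τ st r y)) s' * ENNReal.ofReal (pot n f l s s'.x)) + 1
        = (∑' r, P r * ∑' y, (flipPMF n r st.x) y
            * ENNReal.ofReal (pot n f l s (updateState n f l τ st r y).x)) + 1 := by
          rw [tsum_congr fun r => by rw [hmap r]]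
      _ ≤ (∑' r, P r * ∑' y, (flipPMF n r st.x) y
            * ENNReal.ofReal (pot n f l s (updateState n f l τ st r y).x))
            + d * ∑' r, P r * Q r := by
          exact add_le_add_right hC1 _
      _ ≤ C := hB

lemma stepAbs_inv {n : ℕ} (hn : 1 ≤ n) (f : Point n → ℝ) (l τ : ℕ → ℝ)
    (hl0 : ∀ i, 0 ≤ l i) (hlsum : ∑ i ∈ Finset.Icc 1 n, l i ≤ 1)
    {st : State n} (hst : Inv n st) {s' : State n}
    (hs' : s' ∈ (stepAbs n f l τ st).support) : Inv n s' := by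
  rw [stepAbs] at hs'
  split_ifs at hs' with hop
  · rw [PMF.support_pure, Set.mem_singleton_iff] at hs'
    rw [hs']; exact hst
  · rw [step, PMF.support_bind] at hs'
    simp only [Set.mem_iUnion] at hs'
    obtain ⟨r, hr, hmem⟩ := hs'
    rw [PMF.support_map] at hmem
    obtain ⟨y, _, hy⟩ := hmem
    rw [← hy]
    exact updateState_inv hn f l τ hst
      (ratePMF_support l hl0 hlsum hst.1 hst.2 ((PMF.mem_support_iff _ _).mp hr)) y

lemma stateAt_inv {n : ℕ} (hn : 1 ≤ n) (f : Point n → ℝ) (l τ : ℕ → ℝ)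
    (hl0 : ∀ i, 0 ≤ l i) (hlsum : ∑ i ∈ Finset.Icc 1 n, l i ≤ 1) (t : ℕ)
    {s' : State n} (hs' : s' ∈ (stateAt n f l τ t).support) : Inv n s' := by
  induction t generalizing s' with
  | zero =>
    rw [stateAt, initPMF, PMF.support_map] at hs'
    obtain ⟨x, _, hx⟩ := hs'
    rw [← hx]
    exact ⟨⟨1, Finset.mem_singleton_self 1⟩, by simp [hn]⟩
  | succ t ih =>
    rw [stateAt, PMF.support_bind] at hs'
    simp only [Set.mem_iUnion] at hs'
    obtain ⟨a, ha, hmem⟩ := hs'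
    exact stepAbs_inv hn f l τ hl0 hlsum (ih ha) hmem

lemma main_bound {n : ℕ} (hn : 1 ≤ n) (f : Point n → ℝ) {xopt : Point n}
    (hopt : ∀ y : Point n, y ≠ xopt → f y < f xopt)
    (l τ : ℕ → ℝ) (hl0 : ∀ i, 0 ≤ l i) (hlsum : ∑ i ∈ Finset.Icc 1 n, l i ≤ 1)
    (hl1 : 0 < l 1) (s : ℕ → ℝ)
    (hs : ∀ j ∈ Finset.Icc 1 (numLevels n f - 1), 0 < s j)
    (hsle : ∀ j ∈ Finset.Icc 1 (numLevels n f - 1), ∀ x : Point n,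
      levelIdx n f x = j → s j ≤ improveProb n f x) :
    expectedRuntime n f l τ ≤
      ENNReal.ofReal (1 + (l 1)⁻¹ * ∑ j ∈ Finset.Icc 1 (numLevels n f - 1), (s j)⁻¹) := by
  set B := ENNReal.ofReal ((l 1)⁻¹ * ∑ j ∈ Finset.Icc 1 (numLevels n f - 1), (s j)⁻¹) with hB
  set E : ℕ → ℝ≥0∞ := fun t => ∑' s', (stateAt n f l τ t) s' * ENNReal.ofReal (pot n f l s s'.x)
    with hE
  set Pr : ℕ → ℝ≥0∞ := fun t => (stateAt n f l τ t).toOuterMeasure {s | ¬ isOpt n f s.x}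
    with hPr
  have hHB : ∀ st : State n, ENNReal.ofReal (pot n f l s st.x) ≤ B := fun st =>
    ENNReal.ofReal_le_ofReal (pot_le hl1 hs st.x)
  have hE0 : E 0 ≤ B := tsum_pmf_le_const _ fun a _ => hHB a
  have honestep : ∀ t : ℕ, Pr t + E (t + 1) ≤ E t := by
    intro t
    have hPr_eq : Pr t = ∑' a, (stateAt n f l τ t) a
        * (if isOpt n f a.x then 0 else 1) := by
      show (stateAt n f l τ t).toOuterMeasure {s | ¬ isOpt n f s.x} = _
      rw [PMF.toOuterMeasure_apply]
      refine tsum_congr fun a => ?_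
      rw [Set.indicator_apply]
      by_cases ha : isOpt n f a.x <;> simp [ha]
    have hE1 : E (t + 1) = ∑' a, (stateAt n f l τ t) a
        * ∑' s', (stepAbs n f l τ a) s' * ENNReal.ofReal (pot n f l s s'.x) := by
      rw [hE]
      exact tsum_bind_mul _ _ _
    rw [hPr_eq, hE1, ← ENNReal.tsum_add]
    calc ∑' a, ((stateAt n f l τ t) a * (if isOpt n f a.x then 0 else 1)
          + (stateAt n f l τ t) a
            * ∑' s', (stepAbs n f l τ a) s' * ENNReal.ofReal (pot n f l s s'.x))
        = ∑' a, (stateAt n f l τ t) a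
          * ((∑' s', (stepAbs n f l τ a) s' * ENNReal.ofReal (pot n f l s s'.x))
            + (if isOpt n f a.x then 0 else 1)) := by
          refine tsum_congr fun a => ?_
          rw [mul_add]; ring
      _ ≤ ∑' a, (stateAt n f l τ t) a * ENNReal.ofReal (pot n f l s a.x) := by
          refine ENNReal.tsum_le_tsum fun a => ?_
          by_cases ha : (stateAt n f l τ t) a = 0
          · simp [ha]
          · exact mul_le_mul_right
              (step_drift hn f hopt l τ hl0 hlsum hl1 s hs hsle
                (stateAt_inv hn f l τ hl0 hlsum t ((PMF.mem_support_iff _ _).mpr ha))) _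
      _ = E t := rfl
  have hpartial : ∀ N : ℕ, (∑ t ∈ Finset.range N, Pr t) + E N ≤ E 0 := by
    intro N
    induction N with
    | zero => simp
    | succ N ih =>
      rw [Finset.sum_range_succ, add_assoc]
      exact le_trans (add_le_add_right (honestep N) _) ih
  have htsum : (∑' t : ℕ, Pr t) ≤ B := by
    apply ENNReal.tsum_le_of_sum_range_le
    intro N
    exact le_trans (le_trans le_self_add (hpartial N)) hE0
  rw [expectedRuntime]
  have hXnn : 0 ≤ (l 1)⁻¹ * ∑ j ∈ Finset.Icc 1 (numLevels n f - 1), (s j)⁻¹ := by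
    apply mul_nonneg (inv_nonneg.mpr (le_of_lt hl1))
    exact Finset.sum_nonneg fun k hk => inv_nonneg.mpr (le_of_lt (hs k hk))
  rw [ENNReal.ofReal_add (by norm_num) hXnn, ENNReal.ofReal_one]
  exact add_le_add_right htsum 1

lemma levelIdx_xopt {n : ℕ} (f : Point n → ℝ) {xopt : Point n}
    (hopt : ∀ y : Point n, y ≠ xopt → f y < f xopt) :
    levelIdx n f xopt = numLevels n f := by
  rw [levelIdx, numLevels]
  congr 1
  apply Finset.filter_true_of_mem
  intro v hv
  obtain ⟨y, _, hy⟩ := Finset.mem_image.mp hv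
  rw [← hy]
  exact isOpt_xopt hopt y

lemma one_le_numLevels {n : ℕ} (f : Point n → ℝ) : 1 ≤ numLevels n f := by
  rw [numLevels, ← Finset.card_singleton (f (fun _ => false))]
  apply Finset.card_le_card
  intro v hv
  rw [Finset.mem_singleton] at hv
  exact hv ▸ Finset.mem_image_of_mem f (Finset.mem_univ _)

/-- The flex-EA with `l 1 > 0` on a unimodal function `f` with
`L` fitness levels has expected runtime at most `1 + l₁⁻¹ ∑_{j=1}^{L-1} s_j⁻¹`,
and in particular at most `1 + n (L-1) l₁⁻¹`. -/
theorem flexEA_unimodal (n : ℕ) (hn : 1 ≤ n) (f : Point n → ℝ)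
    (xopt : Point n) (hopt : ∀ y : Point n, y ≠ xopt → f y < f xopt)
    (huni : ∀ x : Point n, x ≠ xopt → ∃ i : Fin n, f x < f (flipSet x {i}))
    (l τ : ℕ → ℝ) (hl0 : ∀ i, 0 ≤ l i) (hlsum : ∑ i ∈ Finset.Icc 1 n, l i ≤ 1)
    (hτ0 : ∀ i, 0 ≤ τ i) (hl1 : 0 < l 1)
    (s : ℕ → ℝ)
    (hs : ∀ j ∈ Finset.Icc 1 (numLevels n f - 1), 0 < s j)
    (hsle : ∀ j ∈ Finset.Icc 1 (numLevels n f - 1), ∀ x : Point n,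
      levelIdx n f x = j → s j ≤ improveProb n f x) :
    expectedRuntime n f l τ ≤
      ENNReal.ofReal (1 + (l 1)⁻¹ * ∑ j ∈ Finset.Icc 1 (numLevels n f - 1), (s j)⁻¹) ∧
    expectedRuntime n f l τ ≤
      ENNReal.ofReal (1 + (n : ℝ) * ((numLevels n f : ℝ) - 1) * (l 1)⁻¹) := by

  have hnpos : (0:ℝ) < n := by exact_mod_cast Nat.pos_of_ne_zero (by omega)
  constructor
  · exact main_bound hn f hopt l τ hl0 hlsum hl1 s hs hsle
  · have hs' : ∀ j ∈ Finset.Icc 1 (numLevels n f - 1), (0:ℝ) < (fun _ : ℕ => (n:ℝ)⁻¹) j :=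
      fun j _ => inv_pos.mpr hnpos
    have hsle' : ∀ j ∈ Finset.Icc 1 (numLevels n f - 1), ∀ x : Point n,
        levelIdx n f x = j → (fun _ : ℕ => (n:ℝ)⁻¹) j ≤ improveProb n f x := by
      intro j hj x hx
      have hxne : x ≠ xopt := by
        intro hc
        subst hc
        rw [levelIdx_xopt f hopt] at hx
        rw [Finset.mem_Icc] at hj
        have := one_le_numLevels f
        omega
      obtain ⟨i, hi⟩ := huni x hxne
      have hcard : 1 ≤ ((Finset.univ.filter
          fun i : Fin n => f x < f (flipSet x {i})).card : ℝ) := by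
        have : (Finset.univ.filter fun i : Fin n => f x < f (flipSet x {i})).Nonempty :=
          ⟨i, Finset.mem_filter.mpr ⟨Finset.mem_univ i, hi⟩⟩
        exact_mod_cast Finset.card_pos.mpr this
      show (n:ℝ)⁻¹ ≤ improveProb n f x
      rw [improveProb, inv_eq_one_div]
      gcongr
    have h := main_bound hn f hopt l τ hl0 hlsum hl1 _ hs' hsle'
    refine le_trans h (le_of_eq ?_)
    congr 1
    have hsum : ∑ j ∈ Finset.Icc 1 (numLevels n f - 1), ((n:ℝ)⁻¹)⁻¹
        = ((numLevels n f - 1 : ℕ) : ℝ) * n := by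
      rw [Finset.sum_const, Nat.card_Icc]
      simp [inv_inv, nsmul_eq_mul]
    rw [hsum]
    have hL : ((numLevels n f - 1 : ℕ) : ℝ) = (numLevels n f : ℝ) - 1 := by
      have := one_le_numLevels f
      push_cast [Nat.cast_sub this]
      ring
    rw [hL]
    ring


end FlexEA
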